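/- Let Ω = (0,1)×(0,1), 1 < p < ∞, 0 < α < 1, and W(x,y) = diag(1, x^{-α} y^{-α}). Then the function f(x,y) = c x^{(α-1)/p + 1} satisfies ∫_Ω |W^{1/p} ∇f|^p dx dy = 1/α < ∞, while ∫_Ω |∇f|^p |W|_op dx dy = ∞; hence f ∈ W^{1,p}_W(Ω) but f ∉ W^{1,p}(v,Ω) with v = |W|_op. -/

import Mathlib

open MeasureTheory Matrix

noncomputable def opNorm {d : ℕ} (A : Matrix (Fin d) (Fin d) ℝ) : ℝ :=
  ‖Matrix.toEuclideanCLM (𝕜 := ℝ) (n := Fin d) A‖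

noncomputable def vnorm {d : ℕ} (v : Fin d → ℝ) : ℝ := Real.sqrt (∑ i, v i ^ 2)

/-- The real power `A^s` of a symmetric matrix, via diagonalization. -/
noncomputable def matRPow {d : ℕ} (A : Matrix (Fin d) (Fin d) ℝ) (s : ℝ) :
    Matrix (Fin d) (Fin d) ℝ :=
  if h : A.IsHermitian then
    (Matrix.IsHermitian.eigenvectorUnitary h : Matrix (Fin d) (Fin d) ℝ) *
      Matrix.diagonal (fun i => h.eigenvalues i ^ s) *
      star (Matrix.IsHermitian.eigenvectorUnitary h : Matrix (Fin d) (Fin d) ℝ)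
  else A

lemma diagMat_isHermitian (t : ℝ) : (Matrix.of ![![1, 0], ![0, t]] : Matrix (Fin 2) (Fin 2) ℝ).IsHermitian := by
  ext i j
  fin_cases i <;> fin_cases j <;> simp [Matrix.conjTranspose_apply]

lemma matRPow_mulVec_fixed {d : ℕ} {A : Matrix (Fin d) (Fin d) ℝ} (hA : A.IsHermitian)
    {v : Fin d → ℝ} (hv : A *ᵥ v = v) (s : ℝ) : matRPow A s *ᵥ v = v := by
  rw [matRPow, dif_pos hA]
  set U : Matrix (Fin d) (Fin d) ℝ := (hA.eigenvectorUnitary : Matrix (Fin d) (Fin d) ℝ) with hU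
  have hU1 : star U * U = 1 := (Matrix.mem_unitaryGroup_iff').mp hA.eigenvectorUnitary.2
  have hU2 : U * star U = 1 := (Matrix.mem_unitaryGroup_iff).mp hA.eigenvectorUnitary.2
  set w : Fin d → ℝ := star U *ᵥ v with hwdef
  have hDw : Matrix.diagonal hA.eigenvalues *ᵥ w = w := by
    have h1 : star U *ᵥ (A *ᵥ v) = star U *ᵥ v := by rw [hv]
    rw [hA.spectral_theorem] at h1
    simp only [RCLike.ofReal_real_eq_id, Function.comp_def, id_eq, Unitary.conjStarAlgAut_apply,
      Unitary.coe_star, ← hU] at h1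
    rw [mulVec_mulVec, ← mul_assoc, ← mul_assoc, hU1, one_mul, ← mulVec_mulVec] at h1
    exact h1
  have hw' : ∀ i, hA.eigenvalues i * w i = w i := fun i => by
    have := congrFun hDw i
    simpa [Matrix.mulVec_diagonal] using this
  have hDsw : Matrix.diagonal (fun i => hA.eigenvalues i ^ s) *ᵥ w = w := by
    funext i
    simp only [Matrix.mulVec_diagonal]
    rcases eq_or_ne (w i) 0 with h | h
    · simp [h]
    · have : hA.eigenvalues i = 1 := by
        have h2 : (hA.eigenvalues i - 1) * w i = 0 := by
          rw [sub_mul, one_mul, hw' i, sub_self]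
        rcases mul_eq_zero.mp h2 with h' | h'
        · linarith [h']
        · exact absurd h' h
      simp [this]
  calc (U * Matrix.diagonal (fun i => hA.eigenvalues i ^ s) * star U) *ᵥ v
      = U *ᵥ (Matrix.diagonal (fun i => hA.eigenvalues i ^ s) *ᵥ (star U *ᵥ v)) := by
        simp [mulVec_mulVec, mul_assoc]
    _ = U *ᵥ w := by rw [← hwdef, hDsw]
    _ = (U * star U) *ᵥ v := by rw [hwdef, mulVec_mulVec]
    _ = v := by rw [hU2, one_mulVec]

lemma vnorm_pair (a : ℝ) : vnorm ![a, 0] = |a| := by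
  simp [vnorm, Fin.sum_univ_two, Real.sqrt_sq_eq_abs]

lemma opNorm_diag (t : ℝ) (ht : 1 ≤ t) :
    opNorm (Matrix.of ![![1, 0], ![0, t]]) = t := by
  have ht0 : (0:ℝ) ≤ t := le_trans zero_le_one ht
  set A : Matrix (Fin 2) (Fin 2) ℝ := Matrix.of ![![1, 0], ![0, t]] with hA
  have hmv : ∀ y : Fin 2 → ℝ, A *ᵥ y = ![y 0, t * y 1] := by
    intro y; funext i
    fin_cases i <;> simp [hA, Matrix.mulVec, dotProduct, Fin.sum_univ_two]
  apply le_antisymm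
  · apply ContinuousLinearMap.opNorm_le_bound _ ht0
    intro x
    have hx : Matrix.toEuclideanCLM (𝕜 := ℝ) A x
        = (WithLp.equiv 2 _).symm (A *ᵥ (WithLp.equiv 2 _ x)) := by
      conv_lhs => rw [← (WithLp.equiv 2 (Fin 2 → ℝ)).symm_apply_apply x]
      rfl
    rw [hx, hmv]
    rw [EuclideanSpace.norm_eq, EuclideanSpace.norm_eq]
    have h1 : t * Real.sqrt (∑ i, ‖x i‖ ^ 2)
        = Real.sqrt (t ^ 2 * ∑ i, ‖x i‖ ^ 2) := by
      rw [Real.sqrt_mul (sq_nonneg t), Real.sqrt_sq ht0]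
    rw [h1]
    apply Real.sqrt_le_sqrt
    simp only [Fin.sum_univ_two, WithLp.equiv_symm_apply, WithLp.ofLp_toLp, Matrix.cons_val_zero,
      Matrix.cons_val_one, Matrix.head_cons, Real.norm_eq_abs, sq_abs]
    have hx0 : WithLp.equiv 2 (Fin 2 → ℝ) x 0 = x 0 := rfl
    have hx1 : WithLp.equiv 2 (Fin 2 → ℝ) x 1 = x 1 := rfl
    rw [hx0, hx1]
    have h2 : (1:ℝ) ≤ t ^ 2 := by nlinarith
    nlinarith [sq_nonneg (x 0), sq_nonneg (x 1)]
  · have key := (Matrix.toEuclideanCLM (𝕜 := ℝ) A).le_opNorm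
      ((WithLp.equiv 2 (Fin 2 → ℝ)).symm ![0, 1])
    rw [show Matrix.toEuclideanCLM (𝕜 := ℝ) A ((WithLp.equiv 2 (Fin 2 → ℝ)).symm ![0, 1])
      = (WithLp.equiv 2 (Fin 2 → ℝ)).symm (A *ᵥ ![0, 1]) from rfl, hmv] at key
    have h1 : ‖(WithLp.equiv 2 (Fin 2 → ℝ)).symm ![(0:ℝ), 1]‖ = 1 := by
      rw [EuclideanSpace.norm_eq]
      simp [Fin.sum_univ_two]
    have h2 : ‖(WithLp.equiv 2 (Fin 2 → ℝ)).symm ![![(0:ℝ),1] 0, t * ![(0:ℝ),1] 1]‖ = t := by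
      rw [EuclideanSpace.norm_eq]
      simp [Fin.sum_univ_two, Real.sqrt_sq ht0]
    rw [h1, h2, mul_one] at key
    exact key

/-- Example 5.1: on `Ω = (0,1)²` with `W = diag(1, x^{-α} y^{-α})` and
`f(x,y) = c x^{(α-1)/p + 1}` (so `∇f = (x^{(α-1)/p}, 0)`), one has
`∫_Ω |W^{1/p} ∇f|^p = 1/α < ∞` while `∫_Ω |∇f|^p |W|_op = ∞`; moreover
`f ∈ L^p(v, Ω)`. Hence `f ∈ W^{1,p}_W(Ω)` but `f ∉ W^{1,p}(v, Ω)`. -/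
theorem example_inclusion_proper (p α : ℝ) (hp : 1 < p) (hα0 : 0 < α) (hα1 : α < 1) :
    let Ω : Set (ℝ × ℝ) := Set.Ioo (0:ℝ) 1 ×ˢ Set.Ioo (0:ℝ) 1
    let W : ℝ × ℝ → Matrix (Fin 2) (Fin 2) ℝ :=
      fun z => Matrix.of ![![1, 0], ![0, z.1 ^ (-α) * z.2 ^ (-α)]]
    let e : ℝ := (α - 1) / p
    let f : ℝ × ℝ → ℝ := fun z => (1 / (e + 1)) * z.1 ^ (e + 1)
    let g : ℝ × ℝ → Fin 2 → ℝ := fun z => ![z.1 ^ e, 0]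
    (∀ z ∈ Ω, HasFDerivAt f ((z.1 ^ e) • ContinuousLinearMap.fst ℝ ℝ ℝ) z) ∧
    (∫ z in Ω, vnorm (matRPow (W z) (1 / p) *ᵥ g z) ^ p) = 1 / α ∧
    IntegrableOn (fun z => vnorm (matRPow (W z) (1 / p) *ᵥ g z) ^ p) Ω volume ∧
    ¬ IntegrableOn (fun z => vnorm (g z) ^ p * opNorm (W z)) Ω volume ∧
    IntegrableOn (fun z => |f z| ^ p * opNorm (W z)) Ω volume := by
  intro Ω W e f g
  have hp0 : (0:ℝ) < p := lt_trans one_pos hp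
  have hep : e * p = α - 1 := div_mul_cancel₀ _ hp0.ne'
  have he1 : (0:ℝ) < e + 1 := by
    have h : -1 < e := by
      rw [show e = (α - 1) / p from rfl, lt_div_iff₀ hp0]
      nlinarith
    linarith
  have hΩm : MeasurableSet Ω := measurableSet_Ioo.prod measurableSet_Ioo
  have hΩeq : Ω = Set.Ioo (0:ℝ) 1 ×ˢ Set.Ioo (0:ℝ) 1 := rfl
  have ht1 : ∀ z ∈ Ω, (1:ℝ) ≤ z.1 ^ (-α) * z.2 ^ (-α) := by
    intro z hz
    have h1 : (1:ℝ) ≤ z.1 ^ (-α) :=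
      Real.one_le_rpow_of_pos_of_le_one_of_nonpos hz.1.1 hz.1.2.le (by linarith)
    have h2 : (1:ℝ) ≤ z.2 ^ (-α) :=
      Real.one_le_rpow_of_pos_of_le_one_of_nonpos hz.2.1 hz.2.2.le (by linarith)
    nlinarith
  have hkey : ∀ z : ℝ × ℝ, matRPow (W z) (1 / p) *ᵥ g z = g z := by
    intro z
    apply matRPow_mulVec_fixed (diagMat_isHermitian _)
    funext i
    fin_cases i <;>
      simp [W, g, Matrix.mulVec, dotProduct, Fin.sum_univ_two]
  have hvn : ∀ z : ℝ × ℝ, 0 < z.1 → vnorm (g z) ^ p = z.1 ^ (α - 1) := by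
    intro z hx
    have h1 : vnorm (g z) = z.1 ^ e := by
      rw [show g z = ![z.1 ^ e, 0] from rfl, vnorm_pair,
        abs_of_nonneg (Real.rpow_nonneg hx.le _)]
    rw [h1, ← Real.rpow_mul hx.le, hep]
  have hop : ∀ z ∈ Ω, opNorm (W z) = z.1 ^ (-α) * z.2 ^ (-α) := fun z hz =>
    opNorm_diag _ (ht1 z hz)
  have heq : Set.EqOn (fun z : ℝ × ℝ => z.1 ^ (α - 1))
      (fun z => vnorm (matRPow (W z) (1 / p) *ᵥ g z) ^ p) Ω := by
    intro z hz
    simp only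
    rw [hkey z, hvn z hz.1.1]
  have hint1d : IntegrableOn (fun x : ℝ => x ^ (α - 1)) (Set.Ioo (0:ℝ) 1) volume :=
    (intervalIntegral.integrableOn_Ioo_rpow_iff zero_lt_one).mpr (by linarith)
  have hone : IntegrableOn (fun _ : ℝ => (1:ℝ)) (Set.Ioo (0:ℝ) 1) volume := by
    apply (integrableOn_const_iff).mpr
    right
    simp [Real.volume_Ioo]
  have hprod : IntegrableOn (fun z : ℝ × ℝ => z.1 ^ (α - 1)) Ω volume := by
    rw [IntegrableOn, hΩeq, MeasureTheory.Measure.volume_eq_prod, ← Measure.prod_restrict]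
    have := hint1d.mul_prod hone
    simpa using this
  refine ⟨?_, ?_, ?_, ?_, ?_⟩
  · -- derivative
    intro z hz
    have hx : 0 < z.1 := hz.1.1
    have h1 : HasDerivAt (fun x : ℝ => (1 / (e + 1)) * x ^ (e + 1))
        ((1 / (e + 1)) * ((e + 1) * z.1 ^ (e + 1 - 1))) z.1 :=
      (Real.hasDerivAt_rpow_const (Or.inl hx.ne')).const_mul ((1:ℝ) / (e + 1))
    have h2 : HasFDerivAt ((fun x : ℝ => (1 / (e + 1)) * x ^ (e + 1)) ∘ Prod.fst)
        (((1 / (e + 1)) * ((e + 1) * z.1 ^ (e + 1 - 1))) •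
          ContinuousLinearMap.fst ℝ ℝ ℝ) z :=
      h1.comp_hasFDerivAt z hasFDerivAt_fst
    have h3 : (1 / (e + 1)) * ((e + 1) * z.1 ^ (e + 1 - 1)) = z.1 ^ e := by
      rw [show e + 1 - 1 = e by ring]
      field_simp
    rw [h3] at h2
    exact h2
  · -- integral value
    rw [← setIntegral_congr_fun hΩm heq]
    rw [hΩeq, MeasureTheory.Measure.volume_eq_prod]
    have hsplit : (∫ z in Set.Ioo (0:ℝ) 1 ×ˢ Set.Ioo (0:ℝ) 1, z.1 ^ (α - 1)
          ∂((volume : Measure ℝ).prod (volume : Measure ℝ)))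
        = (∫ x in Set.Ioo (0:ℝ) 1, x ^ (α - 1)) * (∫ _ in Set.Ioo (0:ℝ) 1, (1:ℝ)) := by
      rw [← MeasureTheory.setIntegral_prod_mul (fun x : ℝ => x ^ (α - 1))
        (fun _ : ℝ => (1:ℝ)) (Set.Ioo (0:ℝ) 1) (Set.Ioo (0:ℝ) 1)]
      simp
    rw [hsplit]
    have hy1 : (∫ _ in Set.Ioo (0:ℝ) 1, (1:ℝ)) = 1 := by
      simp [Real.volume_Ioo]
    have hx1 : (∫ x in Set.Ioo (0:ℝ) 1, x ^ (α - 1)) = 1 / α := by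
      rw [← MeasureTheory.integral_Ioc_eq_integral_Ioo,
        ← intervalIntegral.integral_of_le zero_le_one,
        integral_rpow (Or.inl (by linarith))]
      rw [show α - 1 + 1 = α by ring, Real.one_rpow, Real.zero_rpow hα0.ne']
      ring
    rw [hx1, hy1, mul_one]
  · -- integrability of the weighted gradient
    exact hprod.congr_fun heq hΩm
  · -- non-integrability
    intro hcon
    have hlow : ∀ z ∈ Ω, z.1 ^ (-1:ℝ) ≤ vnorm (g z) ^ p * opNorm (W z) := by
      intro z hz
      have hx : 0 < z.1 := hz.1.1
      have hy : 0 < z.2 := hz.2.1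
      rw [hvn z hx, hop z hz]
      have h2 : z.1 ^ (-α) ≤ z.1 ^ (-α) * z.2 ^ (-α) := by
        have h3 : (1:ℝ) ≤ z.2 ^ (-α) :=
          Real.one_le_rpow_of_pos_of_le_one_of_nonpos hy hz.2.2.le (by linarith)
        nlinarith [Real.rpow_nonneg hx.le (-α)]
      calc z.1 ^ (-1:ℝ) = z.1 ^ (α - 1) * z.1 ^ (-α) := by
            rw [← Real.rpow_add hx]; ring_nf
        _ ≤ z.1 ^ (α - 1) * (z.1 ^ (-α) * z.2 ^ (-α)) :=
            mul_le_mul_of_nonneg_left h2 (Real.rpow_nonneg hx.le _)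
    have hmeas : AEStronglyMeasurable (fun z : ℝ × ℝ => z.1 ^ (-1:ℝ))
        (volume.restrict Ω) :=
      (by fun_prop : Measurable (fun z : ℝ × ℝ => z.1 ^ (-1:ℝ))).aestronglyMeasurable
    have hInt : IntegrableOn (fun z : ℝ × ℝ => z.1 ^ (-1:ℝ)) Ω volume := by
      apply Integrable.mono' hcon hmeas
      filter_upwards [ae_restrict_mem hΩm] with z hz
      rw [Real.norm_eq_abs, abs_of_nonneg (Real.rpow_nonneg hz.1.1.le _)]
      exact hlow z hz
    rw [IntegrableOn, hΩeq, MeasureTheory.Measure.volume_eq_prod, ← Measure.prod_restrict] at hInt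
    have hne : (volume.restrict (Set.Ioo (0:ℝ) 1)) ≠ 0 := by
      simp [Measure.restrict_eq_zero, Real.volume_Ioo]
    haveI : (ae (volume.restrict (Set.Ioo (0:ℝ) 1))).NeBot := ae_neBot.mpr hne
    obtain ⟨y, hy⟩ := hInt.prod_left_ae.exists
    have h4 : IntegrableOn (fun x : ℝ => x ^ (-1:ℝ)) (Set.Ioo (0:ℝ) 1) volume := hy
    rw [intervalIntegral.integrableOn_Ioo_rpow_iff zero_lt_one] at h4
    linarith
  · -- integrability of |f|^p * opNorm W
    set c : ℝ := 1 / (e + 1) with hc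
    have hcpos : 0 < c := by positivity
    have heq5 : Set.EqOn
        (fun z : ℝ × ℝ => (fun x : ℝ => c ^ p * x ^ (p - 1)) z.1 * (fun y : ℝ => y ^ (-α)) z.2)
        (fun z => |f z| ^ p * opNorm (W z)) Ω := by
      intro z hz
      have hx : 0 < z.1 := hz.1.1
      simp only
      rw [hop z hz]
      have hfz : |f z| = c * z.1 ^ (e + 1) := by
        rw [show f z = c * z.1 ^ (e + 1) from rfl]
        exact abs_of_nonneg (by positivity)
      rw [hfz, Real.mul_rpow hcpos.le (Real.rpow_nonneg hx.le _)]
      have hkey2 : (z.1 ^ (e + 1)) ^ p * z.1 ^ (-α) = z.1 ^ (p - 1) := by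
        rw [← Real.rpow_mul hx.le, ← Real.rpow_add hx]
        congr 1
        rw [add_mul, one_mul, hep]; ring
      linear_combination (-(c ^ p * z.2 ^ (-α))) * hkey2
    have hi1 : IntegrableOn (fun x : ℝ => c ^ p * x ^ (p - 1)) (Set.Ioo (0:ℝ) 1) volume :=
      ((intervalIntegral.integrableOn_Ioo_rpow_iff zero_lt_one).mpr (by linarith)).const_mul _
    have hi2 : IntegrableOn (fun y : ℝ => y ^ (-α)) (Set.Ioo (0:ℝ) 1) volume :=
      (intervalIntegral.integrableOn_Ioo_rpow_iff zero_lt_one).mpr (by linarith)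
    have hprod5 : IntegrableOn
        (fun z : ℝ × ℝ => (fun x : ℝ => c ^ p * x ^ (p - 1)) z.1 * (fun y : ℝ => y ^ (-α)) z.2)
        Ω volume := by
      rw [IntegrableOn, hΩeq, MeasureTheory.Measure.volume_eq_prod, ← Measure.prod_restrict]
      exact hi1.mul_prod hi2
    exact hprod5.congr_fun heq5 hΩm
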